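/- For any f ∈ H, any m ∈ I_N, and any z ∈ ℂᴺ, one has |⟨y, vₘ⟩| ≤ √σₘ ‖f − T_N z‖ + σₘ ‖z‖, where y = T_N* f. -/

import Mathlib

open scoped ComplexInnerProductSpace

theorem stmt_12 {H : Type*} [NormedAddCommGroup H] [InnerProductSpace ℂ H]
    {N : ℕ} (φ : Fin N → H) (σ : Fin N → ℝ)
    (v : Fin N → EuclideanSpace ℂ (Fin N)) (hv : Orthonormal ℂ v)
    (G : Matrix (Fin N) (Fin N) ℂ) (hG : ∀ m k, G m k = ⟪φ m, φ k⟫)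
    (heig : ∀ n i, G.mulVec (fun j => v n j) i = (σ n : ℂ) * v n i)
    (T : EuclideanSpace ℂ (Fin N) → H) (hT : ∀ z, T z = ∑ n, z n • φ n)
    (ξ : Fin N → H) (hξ : ∀ n, ξ n = T (v n))
    (hσ : ∀ n, 0 ≤ σ n)
    (f : H) (y : EuclideanSpace ℂ (Fin N)) (hy : ∀ n, y n = ⟪φ n, f⟫)
    (m : Fin N) (z : EuclideanSpace ℂ (Fin N)) :
    ‖⟪v m, y⟫‖ ≤ Real.sqrt (σ m) * ‖f - T z‖ + σ m * ‖z‖ := by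
  have hTu : ∀ (u : EuclideanSpace ℂ (Fin N)) (w : H),
      ⟪T u, w⟫ = ∑ n, (starRingEnd ℂ) (u n) * ⟪φ n, w⟫ := by
    intro u w
    rw [hT, sum_inner]
    simp [inner_smul_left]
  have hφT : ∀ (n : Fin N) (u : EuclideanSpace ℂ (Fin N)),
      ⟪φ n, T u⟫ = G.mulVec (fun j => u j) n := by
    intro n u
    rw [hT, inner_sum]
    simp [inner_smul_right, Matrix.mulVec, dotProduct, hG, mul_comm]
  -- ⟪v m, y⟫ = ⟪T (v m), f⟫
  have h1 : ⟪v m, y⟫ = ⟪T (v m), f⟫ := by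
    rw [hTu]
    rw [PiLp.inner_apply]
    simp [hy, RCLike.inner_apply]
    exact Finset.sum_congr rfl (fun _ _ => mul_comm _ _)
  -- ‖T (v m)‖² = σ m
  have h2 : ⟪T (v m), T (v m)⟫ = (σ m : ℂ) := by
    rw [hTu]
    have : ∀ n : Fin N, (starRingEnd ℂ) (v m n) * ⟪φ n, T (v m)⟫
        = (σ m : ℂ) * ((starRingEnd ℂ) (v m n) * v m n) := by
      intro n
      rw [hφT, heig]
      ring
    rw [Finset.sum_congr rfl (fun n _ => this n), ← Finset.mul_sum]
    have hvm : (∑ n, (starRingEnd ℂ) (v m n) * v m n) = 1 := by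
      have := hv.inner_right_fintype
      have h := hv.2 (i := m)
      have hnorm : ⟪v m, v m⟫ = (1 : ℂ) := by
        rw [inner_self_eq_norm_sq_to_K, hv.1 m]
        norm_num
      rw [PiLp.inner_apply] at hnorm
      simpa [RCLike.inner_apply, Complex.conj_mul'] using hnorm
    rw [hvm, mul_one]
  have hnTvm : ‖T (v m)‖ = Real.sqrt (σ m) := by
    have := norm_eq_sqrt_re_inner (𝕜 := ℂ) (T (v m))
    rw [h2] at this
    simpa using this
  -- ⟪T (v m), T z⟫ = σ m * ⟪v m, z⟫
  have h3 : ⟪T (v m), T z⟫ = (σ m : ℂ) * ⟪v m, z⟫ := by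
    have hz : ⟪T z, T (v m)⟫ = (σ m : ℂ) * ⟪z, v m⟫ := by
      rw [hTu]
      have : ∀ k : Fin N, (starRingEnd ℂ) (z k) * ⟪φ k, T (v m)⟫
          = (σ m : ℂ) * ((starRingEnd ℂ) (z k) * v m k) := by
        intro k
        rw [hφT, heig]
        ring
      rw [Finset.sum_congr rfl (fun k _ => this k), ← Finset.mul_sum,
        PiLp.inner_apply]
      norm_num [RCLike.inner_apply]
      exact Or.inl (Finset.sum_congr rfl (fun _ _ => mul_comm _ _))
    calc ⟪T (v m), T z⟫ = (starRingEnd ℂ) ⟪T z, T (v m)⟫ := by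
          rw [inner_conj_symm]
      _ = (σ m : ℂ) * ⟪v m, z⟫ := by
          rw [hz, map_mul, inner_conj_symm, Complex.conj_ofReal]
  -- decompose
  have hdecomp : ⟪v m, y⟫ = ⟪T (v m), f - T z⟫ + (σ m : ℂ) * ⟪v m, z⟫ := by
    rw [inner_sub_right, h1, h3]
    ring
  rw [hdecomp]
  calc ‖⟪T (v m), f - T z⟫ + (σ m : ℂ) * ⟪v m, z⟫‖
      ≤ ‖⟪T (v m), f - T z⟫‖ + ‖(σ m : ℂ) * ⟪v m, z⟫‖ := norm_add_le _ _
    _ ≤ Real.sqrt (σ m) * ‖f - T z‖ + σ m * ‖z‖ := by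
        gcongr
        · calc ‖⟪T (v m), f - T z⟫‖ ≤ ‖T (v m)‖ * ‖f - T z‖ := norm_inner_le_norm _ _
            _ = Real.sqrt (σ m) * ‖f - T z‖ := by rw [hnTvm]
        · rw [norm_mul]
          calc ‖(σ m : ℂ)‖ * ‖⟪v m, z⟫‖ ≤ σ m * (‖v m‖ * ‖z‖) := by
                rw [Complex.norm_real, Real.norm_of_nonneg (hσ m)]
                exact mul_le_mul_of_nonneg_left (norm_inner_le_norm _ _) (hσ m)
            _ = σ m * ‖z‖ := by rw [hv.1 m, one_mul]
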